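/- (Woodcock's identity) For positive integers m and n, (1/m) * sum_{k=1}^{m} binomial(m,k) * (-1)^k * B_{m-k} * B_{n-1+k} = (1/n) * sum_{k=1}^{n} binomial(n,k) * (-1)^k * B_{n-k} * B_{m-1+k}. -/

import Mathlib

open Finset

namespace WoodcockAux

open Finset PowerSeries Nat

noncomputable section

/-- Substitution `t ↦ y - x` into a one-variable power series, landing in `ℚ⟦y⟧⟦x⟧`. -/
def Phi (f : PowerSeries ℚ) : PowerSeries (PowerSeries ℚ) :=
  PowerSeries.mk fun j => PowerSeries.mk fun a =>
    (-1 : ℚ) ^ j * ((j + a).choose j : ℚ) * (PowerSeries.coeff (j + a) f)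

lemma coeff_Phi (f : PowerSeries ℚ) (j a : ℕ) :
    PowerSeries.coeff a (PowerSeries.coeff j (Phi f)) =
      (-1 : ℚ) ^ j * ((j + a).choose j : ℚ) * (PowerSeries.coeff (j + a) f) := by
  simp [Phi]

lemma Phi_add (f g : PowerSeries ℚ) : Phi (f + g) = Phi f + Phi g := by
  ext j : 1
  ext a : 1
  simp [coeff_Phi, mul_add]

lemma Phi_neg (f : PowerSeries ℚ) : Phi (-f) = -Phi f := by
  ext j : 1
  ext a : 1
  simp [coeff_Phi]

lemma Phi_one : Phi 1 = 1 := by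
  ext j : 1
  ext a : 1
  rw [coeff_Phi]
  rcases j with _ | j <;> rcases a with _ | a <;>
    simp [PowerSeries.coeff_one]

lemma Phi_X : Phi PowerSeries.X =
    PowerSeries.C PowerSeries.X - PowerSeries.X := by
  ext j : 1
  ext a : 1
  rw [coeff_Phi, map_sub, PowerSeries.coeff_C]
  rcases j with _ | _ | j <;> rcases a with _ | _ | a <;>
    simp [PowerSeries.coeff_X, PowerSeries.coeff_one] <;> omega

lemma Phi_mul (f g : PowerSeries ℚ) : Phi (f * g) = Phi f * Phi g := by
  ext j : 1
  ext a : 1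
  have hL : PowerSeries.coeff a (PowerSeries.coeff j (Phi (f * g)))
      = ∑ z ∈ antidiagonal (j + a) ×ˢ antidiagonal j,
          (-1 : ℚ) ^ j * ((z.1.1.choose z.2.1 : ℚ) * (z.1.2.choose z.2.2 : ℚ)) *
            (PowerSeries.coeff z.1.1 f * PowerSeries.coeff z.1.2 g) := by
    rw [coeff_Phi, PowerSeries.coeff_mul, Finset.mul_sum, Finset.sum_product]
    apply Finset.sum_congr rfl
    intro r hr
    rw [HasAntidiagonal.mem_antidiagonal] at hr
    have h1 : ((j + a).choose j : ℚ) = ∑ p ∈ antidiagonal j,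
        (r.1.choose p.1 : ℚ) * (r.2.choose p.2 : ℚ) := by
      rw [← hr, Nat.add_choose_eq]
      push_cast
      rfl
    rw [h1, Finset.mul_sum, Finset.sum_mul]
  have hR : PowerSeries.coeff a (PowerSeries.coeff j (Phi f * Phi g))
      = ∑ w ∈ antidiagonal j ×ˢ antidiagonal a,
          ((-1 : ℚ) ^ w.1.1 * ((w.1.1 + w.2.1).choose w.1.1 : ℚ) *
              PowerSeries.coeff (w.1.1 + w.2.1) f) *
            ((-1 : ℚ) ^ w.1.2 * ((w.1.2 + w.2.2).choose w.1.2 : ℚ) *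
              PowerSeries.coeff (w.1.2 + w.2.2) g) := by
    rw [PowerSeries.coeff_mul, map_sum, Finset.sum_product]
    apply Finset.sum_congr rfl
    intro p _
    rw [PowerSeries.coeff_mul]
    apply Finset.sum_congr rfl
    intro q _
    rw [coeff_Phi, coeff_Phi]
  rw [hL, hR]
  rw [← Finset.sum_filter_of_ne (p := fun z => z.2.1 ≤ z.1.1 ∧ z.2.2 ≤ z.1.2)]
  · symm
    refine Finset.sum_nbij' (fun w => ((w.1.1 + w.2.1, w.1.2 + w.2.2), w.1))
      (fun z => (z.2, (z.1.1 - z.2.1, z.1.2 - z.2.2))) ?_ ?_ ?_ ?_ ?_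
    · intro w hw
      simp only [Finset.mem_product, HasAntidiagonal.mem_antidiagonal] at hw
      simp only [Finset.mem_filter, Finset.mem_product, HasAntidiagonal.mem_antidiagonal]
      omega
    · intro z hz
      simp only [Finset.mem_filter, Finset.mem_product, HasAntidiagonal.mem_antidiagonal] at hz
      simp only [Finset.mem_product, HasAntidiagonal.mem_antidiagonal]
      omega
    · intro w hw
      simp only [Finset.mem_product, HasAntidiagonal.mem_antidiagonal] at hw
      simp only [Prod.ext_iff, true_and, and_true]
      omega
    · intro z hz
      simp only [Finset.mem_filter, Finset.mem_product, HasAntidiagonal.mem_antidiagonal] at hz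
      simp only [Prod.ext_iff, true_and, and_true]
      omega
    · intro w hw
      simp only [Finset.mem_product, HasAntidiagonal.mem_antidiagonal] at hw
      have hsign : (-1 : ℚ) ^ w.1.1 * (-1 : ℚ) ^ w.1.2 = (-1 : ℚ) ^ j := by
        rw [← pow_add, hw.1]
      calc ((-1 : ℚ) ^ w.1.1 * ((w.1.1 + w.2.1).choose w.1.1 : ℚ) *
              PowerSeries.coeff (w.1.1 + w.2.1) f) *
            ((-1 : ℚ) ^ w.1.2 * ((w.1.2 + w.2.2).choose w.1.2 : ℚ) *
              PowerSeries.coeff (w.1.2 + w.2.2) g)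
          = ((-1 : ℚ) ^ w.1.1 * (-1 : ℚ) ^ w.1.2) *
              (((w.1.1 + w.2.1).choose w.1.1 : ℚ) * ((w.1.2 + w.2.2).choose w.1.2 : ℚ)) *
              (PowerSeries.coeff (w.1.1 + w.2.1) f *
                PowerSeries.coeff (w.1.2 + w.2.2) g) := by ring
        _ = _ := by rw [hsign]
  · intro z hz hnz
    simp only [Finset.mem_product, HasAntidiagonal.mem_antidiagonal] at hz
    by_contra hp
    push_neg at hp
    apply hnz
    rcases Nat.lt_or_ge z.1.1 z.2.1 with h | h
    · rw [Nat.choose_eq_zero_of_lt h]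
      simp
    · have h2 : z.1.2 < z.2.2 := hp h
      rw [Nat.choose_eq_zero_of_lt h2]
      simp


/-! ### The six basic series in `ℚ⟦y⟧⟦x⟧` -/

def bX : PowerSeries (PowerSeries ℚ) := PowerSeries.map C (bernoulliPowerSeries ℚ)
def eX : PowerSeries (PowerSeries ℚ) := PowerSeries.map C (exp ℚ)
def bY : PowerSeries (PowerSeries ℚ) := PowerSeries.C (bernoulliPowerSeries ℚ)
def eY : PowerSeries (PowerSeries ℚ) := PowerSeries.C (exp ℚ)
def bYX : PowerSeries (PowerSeries ℚ) := Phi (bernoulliPowerSeries ℚ)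
def eYX : PowerSeries (PowerSeries ℚ) := Phi (exp ℚ)
def bXY : PowerSeries (PowerSeries ℚ) := Phi (rescale (-1) (bernoulliPowerSeries ℚ))
def eXY : PowerSeries (PowerSeries ℚ) := Phi (rescale (-1) (exp ℚ))
def Yv : PowerSeries (PowerSeries ℚ) := PowerSeries.C PowerSeries.X

lemma r1 : bX * (eX - 1) = PowerSeries.X := by
  have := congrArg (PowerSeries.map C) (bernoulliPowerSeries_mul_exp_sub_one ℚ)
  simpa [bX, eX, map_mul, map_sub] using this

lemma r2 : bY * (eY - 1) = Yv := by
  have := congrArg (PowerSeries.C) (bernoulliPowerSeries_mul_exp_sub_one ℚ)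
  simpa [bY, eY, Yv, map_mul, map_sub] using this

lemma hBE : bernoulliPowerSeries ℚ * exp ℚ = PowerSeries.X + bernoulliPowerSeries ℚ := by
  linear_combination bernoulliPowerSeries_mul_exp_sub_one ℚ

lemma r3 : bYX * (eYX - 1) = Yv - PowerSeries.X := by
  have h := congrArg Phi hBE
  rw [Phi_mul, Phi_add, Phi_X] at h
  rw [bYX, eYX, Yv]
  linear_combination h

lemma r4 : bXY * (eXY - 1) = PowerSeries.X - Yv := by
  have h0 : rescale (-1 : ℚ) (bernoulliPowerSeries ℚ) * rescale (-1 : ℚ) (exp ℚ)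
      = -PowerSeries.X + rescale (-1 : ℚ) (bernoulliPowerSeries ℚ) := by
    have := congrArg (rescale (-1 : ℚ)) hBE
    rwa [map_mul, map_add, rescale_neg_one_X] at this
  have h := congrArg Phi h0
  rw [Phi_mul, Phi_add, Phi_neg, Phi_X] at h
  rw [bXY, eXY, Yv]
  linear_combination h

lemma r5 : eXY * eYX = 1 := by
  have h0 : rescale (-1 : ℚ) (exp ℚ) * exp ℚ = 1 := by
    have h1 := exp_mul_exp_neg_eq_one (A := ℚ)
    rw [evalNegHom] at h1
    rw [mul_comm]
    exact h1
  have h := congrArg Phi h0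
  rw [Phi_mul, Phi_one] at h
  rw [eXY, eYX]
  exact h

lemma alt_sum (j : ℕ) :
    ∑ k ∈ range (j + 1), (-1 : ℚ) ^ k * (1 / (k ! : ℚ)) * (1 / ((j - k)! : ℚ))
      = if j = 0 then 1 else 0 := by
  have hq : ∑ k ∈ range (j + 1), (-1 : ℚ) ^ k * (j.choose k : ℚ)
      = if j = 0 then 1 else 0 := by
    have h := Int.alternating_sum_range_choose (n := j)
    calc (∑ k ∈ range (j + 1), (-1 : ℚ) ^ k * (j.choose k : ℚ))
        = ((∑ k ∈ range (j + 1), (-1 : ℤ) ^ k * (j.choose k : ℤ) : ℤ) : ℚ) := by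
          push_cast; rfl
      _ = ((if j = 0 then (1 : ℤ) else 0) : ℚ) := by rw [h]; split_ifs <;> simp
      _ = if j = 0 then 1 else 0 := by split_ifs <;> simp
  calc ∑ k ∈ range (j + 1), (-1 : ℚ) ^ k * (1 / (k ! : ℚ)) * (1 / ((j - k)! : ℚ))
      = ∑ k ∈ range (j + 1), (1 / (j ! : ℚ)) * ((-1 : ℚ) ^ k * (j.choose k : ℚ)) := by
        apply Finset.sum_congr rfl
        intro k hk
        rw [mem_range] at hk
        have hk' : k ≤ j := by omega
        have hfac : ((j.choose k : ℚ)) * (k ! : ℚ) * ((j - k)! : ℚ) = (j ! : ℚ) := by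
          exact_mod_cast congrArg (Nat.cast (R := ℚ)) (Nat.choose_mul_factorial_mul_factorial hk')
        have h1 : (k ! : ℚ) ≠ 0 := Nat.cast_ne_zero.mpr (Nat.factorial_ne_zero k)
        have h2 : ((j - k)! : ℚ) ≠ 0 := Nat.cast_ne_zero.mpr (Nat.factorial_ne_zero _)
        have h3 : (j ! : ℚ) ≠ 0 := Nat.cast_ne_zero.mpr (Nat.factorial_ne_zero j)
        field_simp
        linear_combination (-1 : ℚ) * hfac
      _ = (1 / (j ! : ℚ)) * ∑ k ∈ range (j + 1), ((-1 : ℚ) ^ k * (j.choose k : ℚ)) :=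
          (Finset.mul_sum _ _ _).symm
      _ = if j = 0 then 1 else 0 := by
          rw [hq]
          split_ifs with h
          · subst h; simp
          · simp

lemma choose_factorial_q (p a : ℕ) :
    ((p + a).choose p : ℚ) * (1 / ((p + a)! : ℚ)) = (1 / (p ! : ℚ)) * (1 / (a ! : ℚ)) := by
  have hfac : ((a + p).choose p : ℚ) * (a ! : ℚ) * (p ! : ℚ) = ((a + p)! : ℚ) := by
    exact_mod_cast congrArg (Nat.cast (R := ℚ)) (Nat.add_choose_mul_factorial_mul_factorial a p)
  rw [Nat.add_comm p a]
  have h1 : (p ! : ℚ) ≠ 0 := Nat.cast_ne_zero.mpr (Nat.factorial_ne_zero p)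
  have h2 : (a ! : ℚ) ≠ 0 := Nat.cast_ne_zero.mpr (Nat.factorial_ne_zero a)
  have h3 : (((a + p)!) : ℚ) ≠ 0 := Nat.cast_ne_zero.mpr (Nat.factorial_ne_zero _)
  field_simp
  linear_combination hfac

lemma r6 : eYX * eX = eY := by
  ext j : 1
  ext a : 1
  rw [eYX, eX, eY, PowerSeries.coeff_mul, map_sum]
  have hterm : ∀ p ∈ antidiagonal j,
      PowerSeries.coeff a (PowerSeries.coeff p.1 (Phi (exp ℚ)) *
        PowerSeries.coeff p.2 (PowerSeries.map C (exp ℚ)))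
      = (1 / (a ! : ℚ)) * ((-1 : ℚ) ^ p.1 * (1 / (p.1 ! : ℚ)) * (1 / (p.2 ! : ℚ))) := by
    intro p _
    rw [PowerSeries.coeff_map, mul_comm, PowerSeries.coeff_C_mul, coeff_Phi, coeff_exp, coeff_exp]
    simp only [Algebra.algebraMap_self_apply]
    linear_combination ((-1 : ℚ) ^ p.1 * (1 / (p.2 ! : ℚ))) * choose_factorial_q p.1 a
  rw [Finset.sum_congr rfl hterm, ← Finset.mul_sum,
    Finset.Nat.sum_antidiagonal_eq_sum_range_succ_mk, alt_sum, PowerSeries.coeff_C]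
  split_ifs with h
  · subst h
    rw [coeff_exp]
    simp [Algebra.algebraMap_self_apply]
  · simp

lemma h7 : bXY * (eYX - 1) = eYX * (Yv - PowerSeries.X) := by
  linear_combination bXY * r5 - eYX * r4

lemma key : (Yv * (bX * bYX) - PowerSeries.X * (bY * bXY)
      - (Yv - PowerSeries.X) * (bX * bY)) *
    ((eX - 1) * ((eY - 1) * (eYX - 1))) = 0 := by
  linear_combination
    (Yv * (eY - 1) * (eYX - 1) * bYX - (Yv - PowerSeries.X) * (eY - 1) * (eYX - 1) * bY) * r1
    + (-(PowerSeries.X * (eX - 1) * (eYX - 1) * bXY)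
        - (Yv - PowerSeries.X) * (eYX - 1) * PowerSeries.X) * r2
    + (Yv * (eY - 1) * PowerSeries.X) * r3
    + (-(PowerSeries.X * (eX - 1) * Yv)) * h7
    + (-(PowerSeries.X * Yv * (Yv - PowerSeries.X))) * r6

lemma hEx : eX - 1 ≠ 0 := by
  intro h
  have h2 := congrArg (PowerSeries.coeff 1) h
  simp [eX, coeff_exp, PowerSeries.coeff_one] at h2

lemma hEy : eY - 1 ≠ 0 := by
  intro h
  have h2 := congrArg (fun F => PowerSeries.coeff 1
    (PowerSeries.coeff 0 F)) h
  simp [eY, PowerSeries.coeff_C, coeff_exp, PowerSeries.coeff_one] at h2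

lemma hEyx : eYX - 1 ≠ 0 := by
  intro h
  have h2 : PowerSeries.coeff 1 (PowerSeries.coeff 0 (eYX - 1)) = 1 := by
    rw [map_sub, map_sub, eYX, coeff_Phi]
    simp [coeff_exp, PowerSeries.coeff_one]
  rw [h] at h2
  simp at h2

lemma series_id : Yv * (bX * bYX) - PowerSeries.X * (bY * bXY)
    = (Yv - PowerSeries.X) * (bX * bY) := by
  have hk := key
  rcases mul_eq_zero.mp hk with h | h
  · linear_combination h
  · exfalso
    rcases mul_eq_zero.mp h with h' | h'
    · exact hEx h'
    rcases mul_eq_zero.mp h' with h'' | h''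
    · exact hEy h''
    · exact hEyx h''

lemma coeff_bps (n : ℕ) :
    PowerSeries.coeff n (bernoulliPowerSeries ℚ) = bernoulli n / n ! := by
  simp [bernoulliPowerSeries]

lemma neg_one_sq_pow (μ : ℕ) : (-1 : ℚ) ^ μ * (-1 : ℚ) ^ μ = 1 := by
  rw [← pow_add, ← two_mul, pow_mul]
  norm_num

lemma hA (μ ν : ℕ) :
    PowerSeries.coeff (ν + 1) (PowerSeries.coeff (μ + 1)
      (Yv * (bX * bYX)))
    = ∑ k ∈ range (μ + 2), (bernoulli (μ + 1 - k) / (μ + 1 - k)!) *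
        ((-1 : ℚ) ^ k * ((k + ν).choose k : ℚ) * (bernoulli (k + ν) / (k + ν)!)) := by
  rw [Yv, PowerSeries.coeff_C_mul, PowerSeries.coeff_succ_X_mul, PowerSeries.coeff_mul, map_sum]
  have hterm : ∀ p ∈ antidiagonal (μ + 1),
      PowerSeries.coeff ν (PowerSeries.coeff p.1 bX *
        PowerSeries.coeff p.2 bYX)
      = (bernoulli p.1 / p.1 !) *
          ((-1 : ℚ) ^ p.2 * ((p.2 + ν).choose p.2 : ℚ) * (bernoulli (p.2 + ν) / (p.2 + ν)!)) := by
    intro p _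
    rw [bX, PowerSeries.coeff_map, bYX, PowerSeries.coeff_C_mul, coeff_Phi, coeff_bps, coeff_bps]
    try ring
  rw [Finset.sum_congr rfl hterm, ← Finset.Nat.sum_antidiagonal_swap,
    Finset.Nat.sum_antidiagonal_eq_sum_range_succ_mk]
  simp [Prod.swap_prod_mk]

lemma hB (μ ν : ℕ) :
    PowerSeries.coeff (ν + 1) (PowerSeries.coeff (μ + 1)
      (PowerSeries.X * (bY * bXY)))
    = ∑ k ∈ range (ν + 2), (bernoulli (ν + 1 - k) / (ν + 1 - k)!) *
        ((-1 : ℚ) ^ k * ((μ + k).choose μ : ℚ) * (bernoulli (μ + k) / (μ + k)!)) := by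
  rw [PowerSeries.coeff_succ_X_mul, bY, PowerSeries.coeff_C_mul, PowerSeries.coeff_mul]
  have hterm : ∀ q ∈ antidiagonal (ν + 1),
      PowerSeries.coeff q.1 (bernoulliPowerSeries ℚ) *
        PowerSeries.coeff q.2 (PowerSeries.coeff μ bXY)
      = (bernoulli q.1 / q.1 !) *
          ((-1 : ℚ) ^ q.2 * ((μ + q.2).choose μ : ℚ) * (bernoulli (μ + q.2) / (μ + q.2)!)) := by
    intro q _
    rw [coeff_bps, bXY, coeff_Phi, coeff_rescale, coeff_bps]
    rw [pow_add]
    have h1 : (-1 : ℚ) ^ μ * (-1 : ℚ) ^ μ = 1 := neg_one_sq_pow μ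
    linear_combination (bernoulli q.1 / q.1 ! * (((μ + q.2).choose μ : ℚ)) * (-1 : ℚ) ^ q.2 *
      (bernoulli (μ + q.2) / (μ + q.2)!)) * h1
  rw [Finset.sum_congr rfl hterm, ← Finset.Nat.sum_antidiagonal_swap,
    Finset.Nat.sum_antidiagonal_eq_sum_range_succ_mk]
  simp [Prod.swap_prod_mk]

lemma hC (μ ν : ℕ) :
    PowerSeries.coeff (ν + 1) (PowerSeries.coeff (μ + 1)
      (Yv * (bX * bY)))
    = (bernoulli (μ + 1) / (μ + 1)!) * (bernoulli ν / ν !) := by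
  rw [Yv, PowerSeries.coeff_C_mul, mul_comm bX bY, bY, PowerSeries.coeff_C_mul,
    bX, PowerSeries.coeff_map, PowerSeries.coeff_succ_X_mul, mul_comm,
    PowerSeries.coeff_C_mul, coeff_bps, coeff_bps]

lemma hD (μ ν : ℕ) :
    PowerSeries.coeff (ν + 1) (PowerSeries.coeff (μ + 1)
      (PowerSeries.X * (bX * bY)))
    = (bernoulli (ν + 1) / (ν + 1)!) * (bernoulli μ / μ !) := by
  rw [PowerSeries.coeff_succ_X_mul, mul_comm bX bY, bY, PowerSeries.coeff_C_mul,
    bX, PowerSeries.coeff_map, mul_comm, PowerSeries.coeff_C_mul, coeff_bps, coeff_bps]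
  ring

lemma extraction (μ ν : ℕ) :
    ∑ k ∈ range (μ + 2), (bernoulli (μ + 1 - k) / (μ + 1 - k)!) *
        ((-1 : ℚ) ^ k * ((k + ν).choose k : ℚ) * (bernoulli (k + ν) / (k + ν)!))
    - ∑ k ∈ range (ν + 2), (bernoulli (ν + 1 - k) / (ν + 1 - k)!) *
        ((-1 : ℚ) ^ k * ((μ + k).choose μ : ℚ) * (bernoulli (μ + k) / (μ + k)!))
    = (bernoulli (μ + 1) / (μ + 1)!) * (bernoulli ν / ν !)
      - (bernoulli (ν + 1) / (ν + 1)!) * (bernoulli μ / μ !) := by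
  have h := congrArg (fun F => PowerSeries.coeff (ν + 1)
    (PowerSeries.coeff (μ + 1) F)) series_id
  simp only [map_sub, sub_mul] at h
  rw [hA, hB, hC, hD] at h
  exact h

lemma termL (μ ν k : ℕ) (hk : k ≤ μ + 1) :
    ((μ + 1)! : ℚ) * ((ν + 1)! : ℚ) *
      ((bernoulli (μ + 1 - k) / (μ + 1 - k)!) *
        ((-1 : ℚ) ^ k * ((k + ν).choose k : ℚ) * (bernoulli (k + ν) / (k + ν)!)))
    = ((ν : ℚ) + 1) * (((μ + 1).choose k : ℚ) * (-1 : ℚ) ^ k *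
        bernoulli (μ + 1 - k) * bernoulli (ν + k)) := by
  have f1 : (((μ + 1).choose k : ℚ)) * (k ! : ℚ) * ((μ + 1 - k)! : ℚ) = ((μ + 1)! : ℚ) := by
    exact_mod_cast congrArg (Nat.cast (R := ℚ)) (Nat.choose_mul_factorial_mul_factorial hk)
  have f2 : (((k + ν).choose k : ℚ)) * (k ! : ℚ) * (ν ! : ℚ) = ((k + ν)! : ℚ) := by
    have h := Nat.choose_mul_factorial_mul_factorial (Nat.le_add_right k ν)
    rw [Nat.add_sub_cancel_left] at h
    exact_mod_cast congrArg (Nat.cast (R := ℚ)) h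
  have f3 : ((ν + 1)! : ℚ) = ((ν : ℚ) + 1) * (ν ! : ℚ) := by
    rw [Nat.factorial_succ]
    push_cast
    ring
  have n1 : ((μ + 1 - k)! : ℚ) ≠ 0 := Nat.cast_ne_zero.mpr (Nat.factorial_ne_zero _)
  have n2 : (((k + ν)!) : ℚ) ≠ 0 := Nat.cast_ne_zero.mpr (Nat.factorial_ne_zero _)
  have n3 : (k ! : ℚ) ≠ 0 := Nat.cast_ne_zero.mpr (Nat.factorial_ne_zero _)
  have n4 : (ν ! : ℚ) ≠ 0 := Nat.cast_ne_zero.mpr (Nat.factorial_ne_zero _)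
  have n6 : (((k + ν).choose k : ℕ) : ℚ) ≠ 0 :=
    Nat.cast_ne_zero.mpr (Nat.choose_pos (Nat.le_add_right k ν)).ne'
  rw [Nat.add_comm ν k, ← f1, f3, ← f2]
  field_simp

lemma termM (μ ν k : ℕ) (hk : k ≤ ν + 1) :
    ((μ + 1)! : ℚ) * ((ν + 1)! : ℚ) *
      ((bernoulli (ν + 1 - k) / (ν + 1 - k)!) *
        ((-1 : ℚ) ^ k * ((μ + k).choose μ : ℚ) * (bernoulli (μ + k) / (μ + k)!)))
    = ((μ : ℚ) + 1) * (((ν + 1).choose k : ℚ) * (-1 : ℚ) ^ k *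
        bernoulli (ν + 1 - k) * bernoulli (μ + k)) := by
  have f1 : (((ν + 1).choose k : ℚ)) * (k ! : ℚ) * ((ν + 1 - k)! : ℚ) = ((ν + 1)! : ℚ) := by
    exact_mod_cast congrArg (Nat.cast (R := ℚ)) (Nat.choose_mul_factorial_mul_factorial hk)
  have f2 : (((μ + k).choose μ : ℚ)) * (μ ! : ℚ) * (k ! : ℚ) = ((μ + k)! : ℚ) := by
    have h := Nat.choose_mul_factorial_mul_factorial (Nat.le_add_right μ k)
    rw [Nat.add_sub_cancel_left] at h
    exact_mod_cast congrArg (Nat.cast (R := ℚ)) h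
  have f3 : ((μ + 1)! : ℚ) = ((μ : ℚ) + 1) * (μ ! : ℚ) := by
    rw [Nat.factorial_succ]
    push_cast
    ring
  have n1 : ((ν + 1 - k)! : ℚ) ≠ 0 := Nat.cast_ne_zero.mpr (Nat.factorial_ne_zero _)
  have n2 : (((μ + k)!) : ℚ) ≠ 0 := Nat.cast_ne_zero.mpr (Nat.factorial_ne_zero _)
  have n3 : (k ! : ℚ) ≠ 0 := Nat.cast_ne_zero.mpr (Nat.factorial_ne_zero _)
  have n4 : (μ ! : ℚ) ≠ 0 := Nat.cast_ne_zero.mpr (Nat.factorial_ne_zero _)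
  have n6 : (((μ + k).choose μ : ℕ) : ℚ) ≠ 0 :=
    Nat.cast_ne_zero.mpr (Nat.choose_pos (Nat.le_add_right μ k)).ne'
  rw [← f1, f3, ← f2]
  field_simp

lemma main_id (μ ν : ℕ) :
    ((ν : ℚ) + 1) * ∑ k ∈ Icc 1 (μ + 1), ((μ + 1).choose k : ℚ) * (-1 : ℚ) ^ k *
        bernoulli (μ + 1 - k) * bernoulli (ν + k)
    = ((μ : ℚ) + 1) * ∑ k ∈ Icc 1 (ν + 1), ((ν + 1).choose k : ℚ) * (-1 : ℚ) ^ k *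
        bernoulli (ν + 1 - k) * bernoulli (μ + k) := by
  have E := extraction μ ν
  have hA' : ((μ + 1)! : ℚ) * ((ν + 1)! : ℚ) *
      (∑ k ∈ range (μ + 2), (bernoulli (μ + 1 - k) / (μ + 1 - k)!) *
        ((-1 : ℚ) ^ k * ((k + ν).choose k : ℚ) * (bernoulli (k + ν) / (k + ν)!)))
      = ((ν : ℚ) + 1) * ∑ k ∈ range (μ + 2), ((μ + 1).choose k : ℚ) * (-1 : ℚ) ^ k *
        bernoulli (μ + 1 - k) * bernoulli (ν + k) := by
    rw [Finset.mul_sum, Finset.mul_sum]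
    apply Finset.sum_congr rfl
    intro k hk
    rw [mem_range] at hk
    exact termL μ ν k (by omega)
  have hB' : ((μ + 1)! : ℚ) * ((ν + 1)! : ℚ) *
      (∑ k ∈ range (ν + 2), (bernoulli (ν + 1 - k) / (ν + 1 - k)!) *
        ((-1 : ℚ) ^ k * ((μ + k).choose μ : ℚ) * (bernoulli (μ + k) / (μ + k)!)))
      = ((μ : ℚ) + 1) * ∑ k ∈ range (ν + 2), ((ν + 1).choose k : ℚ) * (-1 : ℚ) ^ k *
        bernoulli (ν + 1 - k) * bernoulli (μ + k) := by
    rw [Finset.mul_sum, Finset.mul_sum]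
    apply Finset.sum_congr rfl
    intro k hk
    rw [mem_range] at hk
    exact termM μ ν k (by omega)
  have hsplit1 : ∑ k ∈ range (μ + 2), ((μ + 1).choose k : ℚ) * (-1 : ℚ) ^ k *
        bernoulli (μ + 1 - k) * bernoulli (ν + k)
      = bernoulli (μ + 1) * bernoulli ν + ∑ k ∈ Icc 1 (μ + 1), ((μ + 1).choose k : ℚ) *
          (-1 : ℚ) ^ k * bernoulli (μ + 1 - k) * bernoulli (ν + k) := by
    rw [range_eq_Ico, Finset.sum_eq_sum_Ico_succ_bot (by omega), show μ + 2 = μ + 1 + 1 from rfl, Finset.Ico_add_one_right_eq_Icc]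
    simp
  have hsplit2 : ∑ k ∈ range (ν + 2), ((ν + 1).choose k : ℚ) * (-1 : ℚ) ^ k *
        bernoulli (ν + 1 - k) * bernoulli (μ + k)
      = bernoulli (ν + 1) * bernoulli μ + ∑ k ∈ Icc 1 (ν + 1), ((ν + 1).choose k : ℚ) *
          (-1 : ℚ) ^ k * bernoulli (ν + 1 - k) * bernoulli (μ + k) := by
    rw [range_eq_Ico, Finset.sum_eq_sum_Ico_succ_bot (by omega), show ν + 2 = ν + 1 + 1 from rfl, Finset.Ico_add_one_right_eq_Icc]
    simp
  have g1 : ((μ + 1)! : ℚ) = ((μ : ℚ) + 1) * (μ ! : ℚ) := by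
    rw [Nat.factorial_succ]; push_cast; ring
  have g2 : ((ν + 1)! : ℚ) = ((ν : ℚ) + 1) * (ν ! : ℚ) := by
    rw [Nat.factorial_succ]; push_cast; ring
  have n4 : (ν ! : ℚ) ≠ 0 := Nat.cast_ne_zero.mpr (Nat.factorial_ne_zero _)
  have n5 : (μ ! : ℚ) ≠ 0 := Nat.cast_ne_zero.mpr (Nat.factorial_ne_zero _)
  have hR1 : ((μ + 1)! : ℚ) * ((ν + 1)! : ℚ) *
      ((bernoulli (μ + 1) / (μ + 1)!) * (bernoulli ν / ν !))
      = ((ν : ℚ) + 1) * (bernoulli (μ + 1) * bernoulli ν) := by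
    rw [g2]
    field_simp
  have hR2 : ((μ + 1)! : ℚ) * ((ν + 1)! : ℚ) *
      ((bernoulli (ν + 1) / (ν + 1)!) * (bernoulli μ / μ !))
      = ((μ : ℚ) + 1) * (bernoulli (ν + 1) * bernoulli μ) := by
    rw [g1]
    field_simp
  have hBig := congrArg (fun t : ℚ => ((μ + 1)! : ℚ) * ((ν + 1)! : ℚ) * t) E
  simp only [mul_sub] at hBig
  rw [hA', hB', hR1, hR2, hsplit1, hsplit2] at hBig
  linear_combination hBig

end

end WoodcockAux

theorem woodcock (m n : ℕ) (hm : 1 ≤ m) (hn : 1 ≤ n) :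
    (1 / (m : ℚ)) * ∑ k ∈ Icc 1 m,
        (m.choose k : ℚ) * (-1 : ℚ) ^ k * bernoulli (m - k) * bernoulli (n - 1 + k) =
    (1 / (n : ℚ)) * ∑ k ∈ Icc 1 n,
        (n.choose k : ℚ) * (-1 : ℚ) ^ k * bernoulli (n - k) * bernoulli (m - 1 + k) := by
  obtain ⟨μ, rfl⟩ : ∃ μ, m = μ + 1 := ⟨m - 1, by omega⟩
  obtain ⟨ν, rfl⟩ : ∃ ν, n = ν + 1 := ⟨n - 1, by omega⟩
  simp only [Nat.add_sub_cancel]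
  have key := WoodcockAux.main_id μ ν
  have hm0 : ((μ : ℚ) + 1) ≠ 0 := by positivity
  have hn0 : ((ν : ℚ) + 1) ≠ 0 := by positivity
  have hc1 : ((μ + 1 : ℕ) : ℚ) = (μ : ℚ) + 1 := by push_cast; ring
  have hc2 : ((ν + 1 : ℕ) : ℚ) = (ν : ℚ) + 1 := by push_cast; ring
  rw [hc1, hc2]
  field_simp
  linear_combination key
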